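/- Let β > 0 be real and let (a_n) be the unique sequence with a_1 = 1 satisfying ∑_{k=1}^n a_k (k/n)⌊n/k⌋ = n^{-β} for all n ≥ 2. Then n·a_n = ∑_{d ∣ n} μ(n/d)(d^{1-β} - (d-1)^{1-β}) for all n ≥ 2, where μ is the Möbius function. -/

import Mathlib

open ArithmeticFunction ArithmeticFunction.Moebius in
theorem stmt_6 (β : ℝ) (hβ : 0 < β) (a : ℕ → ℝ) (ha1 : a 1 = 1)
    (ha : ∀ n : ℕ, 2 ≤ n →
      ∑ k ∈ Finset.Icc 1 n, a k * ((k : ℝ) / n * (n / k : ℕ)) = (n : ℝ) ^ (-β)) :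
    ∀ n : ℕ, 2 ≤ n →
      (n : ℝ) * a n = ∑ d ∈ n.divisors, (μ (n / d) : ℝ) *
        ((d : ℝ) ^ (1 - β) - if d = 1 then 0 else ((d : ℝ) - 1) ^ (1 - β)) := by
  -- Step 1: the "summatory" identity for all n ≥ 1
  have hS : ∀ n : ℕ, 1 ≤ n →
      ∑ k ∈ Finset.Icc 1 n, (k : ℝ) * a k * ((n / k : ℕ) : ℝ) = (n : ℝ) ^ (1 - β) := by
    intro n hn
    rcases eq_or_lt_of_le hn with h1 | h2
    · simp [← h1, ha1]
    · have hn2 : 2 ≤ n := h2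
      have h0 : (0 : ℝ) < n := by exact_mod_cast Nat.lt_of_lt_of_le Nat.zero_lt_two hn2
      have hmul := congrArg (· * (n : ℝ)) (ha n hn2)
      simp only [Finset.sum_mul] at hmul
      calc ∑ k ∈ Finset.Icc 1 n, (k : ℝ) * a k * ((n / k : ℕ) : ℝ)
          = ∑ k ∈ Finset.Icc 1 n, a k * ((k : ℝ) / n * ((n / k : ℕ) : ℝ)) * n := by
            apply Finset.sum_congr rfl
            intro k hk
            field_simp
        _ = (n : ℝ) ^ (-β) * n := hmul
        _ = (n : ℝ) ^ (1 - β) := by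
            rw [show (1 : ℝ) - β = -β + 1 by ring, Real.rpow_add h0, Real.rpow_one]
  -- Step 2: the divisor-sum identity
  have hkey : ∀ n : ℕ, 0 < n →
      ∑ d ∈ n.divisors, (d : ℝ) * a d
        = (n : ℝ) ^ (1 - β) - if n = 1 then 0 else ((n : ℝ) - 1) ^ (1 - β) := by
    intro n hn
    rcases eq_or_lt_of_le (show 1 ≤ n from hn) with h1 | h2
    · simp [← h1, ha1]
    · have hn2 : 2 ≤ n := h2
      set m := n - 1 with hm
      have hnm : n = m + 1 := by omega
      have hm1 : 1 ≤ m := by omega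
      have hdiv : n.divisors = insert n ((Finset.Icc 1 m).filter (· ∣ n)) := by
        ext d
        simp only [Nat.mem_divisors, Finset.mem_insert, Finset.mem_filter, Finset.mem_Icc]
        constructor
        · rintro ⟨hd, hn0⟩
          by_cases hdn : d = n
          · exact Or.inl hdn
          · have h1 : 1 ≤ d := Nat.pos_of_dvd_of_pos hd (by omega)
            have h2 : d ≤ n := Nat.le_of_dvd (by omega) hd
            exact Or.inr ⟨⟨h1, by omega⟩, hd⟩
        · rintro (rfl | ⟨_, hd⟩)
          · exact ⟨dvd_rfl, by omega⟩
          · exact ⟨hd, by omega⟩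
      have hnotmem : n ∉ (Finset.Icc 1 m).filter (· ∣ n) := by
        simp only [Finset.mem_filter, Finset.mem_Icc]
        omega
      -- S n expanded
      have hSn := hS n (by omega)
      have hSm := hS m hm1
      rw [hnm, Finset.sum_Icc_succ_top (by omega : 1 ≤ m + 1)] at hSn
      have hsplit : ∀ k ∈ Finset.Icc 1 m,
          (k : ℝ) * a k * (((m + 1) / k : ℕ) : ℝ)
            = (k : ℝ) * a k * ((m / k : ℕ) : ℝ)
              + (if k ∣ n then (k : ℝ) * a k else 0) := by
        intro k hk
        have := Nat.succ_div (a := m) (b := k)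
        rw [hnm]
        rw [this]
        push_cast
        by_cases hkd : k ∣ m + 1 <;> simp [hkd] <;> ring
      rw [Finset.sum_congr rfl hsplit, Finset.sum_add_distrib, hSm] at hSn
      have hdivsum : ∑ d ∈ n.divisors, (d : ℝ) * a d
          = (n : ℝ) * a n + ∑ k ∈ Finset.Icc 1 m, (if k ∣ n then (k : ℝ) * a k else 0) := by
        rw [hdiv, Finset.sum_insert hnotmem, Finset.sum_filter]
      have hmn1 : ((m + 1 : ℕ) : ℝ) = (n : ℝ) := by rw [← hnm]
      have hmn : (m : ℝ) = (n : ℝ) - 1 := by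
        have : ((m : ℕ) : ℝ) + 1 = (n : ℝ) := by exact_mod_cast hmn1
        linarith
      have hne1 : n ≠ 1 := by omega
      rw [if_neg hne1, ← hmn]
      have hnn : ((m + 1) / (m + 1) : ℕ) = 1 := Nat.div_self (by omega)
      rw [hnn] at hSn
      push_cast at hSn
      rw [hdivsum, ← hmn1]
      rw [show a (m + 1) = a n by rw [← hnm]] at hSn
      push_cast
      linarith
  -- Step 3: Möbius inversion
  have hinv := (ArithmeticFunction.sum_eq_iff_sum_smul_moebius_eq
      (f := fun d => (d : ℝ) * a d)
      (g := fun n => (n : ℝ) ^ (1 - β) - if n = 1 then 0 else ((n : ℝ) - 1) ^ (1 - β))).mp hkey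
  intro n hn
  have h := hinv n (by omega)
  rw [← h]
  rw [← Nat.sum_divisorsAntidiagonal' (f := fun x y =>
      (μ x : ℝ) * ((y : ℝ) ^ (1 - β) - if y = 1 then 0 else ((y : ℝ) - 1) ^ (1 - β)))]
  apply Finset.sum_congr rfl
  intro x hx
  simp [zsmul_eq_mul]
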